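/- Let ε > 0, let G be a finite abelian group of size N, let f : G → ℝ be a function and A ⊆ G with |A| = αN. Suppose B ⊆ G is a symmetric set containing 0 such that for every t ∈ B, ||f * 1_A(· + t) − f * 1_A||_∞ ≤ ε. Assume further ||f||_1 ≤ 1/(2α) and (f * 1_A)(0) ≥ 1 − ε. Then there exists x ∈ G such that |B ∩ (x + A)| ≥ 2α(1 − 2ε)|B|. -/

import Mathlib

open scoped Classical BigOperators Pointwise

variable {G : Type*} [AddCommGroup G] [Fintype G]

/-- The Bohr set `Bohr(Γ, ρ) = {x : |1 - γ(x)| ≤ ρ for all γ ∈ Γ}`. -/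
noncomputable def bohr (Γ : Finset (AddChar G ℂ)) (ρ : ℝ) : Finset G :=
  Finset.univ.filter fun x => ∀ γ ∈ Γ, ‖(1 - γ x)‖ ≤ ρ

/-- Regularity of the Bohr set `Bohr(Γ, ρ)` (dimension `d = Γ.card`). -/
noncomputable def BohrRegular (Γ : Finset (AddChar G ℂ)) (ρ : ℝ) : Prop :=
  ∀ δ : ℝ, |δ| ≤ 1 / (12 * Γ.card) →
    (1 - 12 * Γ.card * |δ|) * (bohr Γ ρ).card ≤ ((bohr Γ (ρ * (1 + δ))).card : ℝ) ∧
    ((bohr Γ (ρ * (1 + δ))).card : ℝ) ≤ (1 + 12 * Γ.card * |δ|) * (bohr Γ ρ).card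

/-- Indicator function of a finite set. -/
noncomputable def ind (A : Finset G) : G → ℝ := fun x => if x ∈ A then 1 else 0

/-- Normalized indicator `μ_A = 1_A / |A|`. -/
noncomputable def mu (A : Finset G) : G → ℝ := fun x => (if x ∈ A then 1 else 0) / A.card

/-- Convolution `(f * g)(x) = ∑ t, f t * g (x - t)`. -/
noncomputable def conv (f g : G → ℝ) : G → ℝ := fun x => ∑ t, f t * g (x - t)

/-- `L¹` norm. -/
noncomputable def l1 (f : G → ℝ) : ℝ := ∑ x, |f x|

/-- almost-periods of `f * 1_A` over a symmetric set `B` yield a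
translate of `A` with density `≥ 2α(1-2ε)` inside `B`. -/
theorem almost_periods_to_increment {G : Type*} [AddCommGroup G] [Fintype G]
    (ε α : ℝ) (hε : 0 < ε) (hα : 0 < α) (f : G → ℝ) (A B : Finset G)
    (hAcard : (A.card : ℝ) = α * Fintype.card G)
    (hB0 : (0 : G) ∈ B) (hBsymm : ∀ x ∈ B, -x ∈ B)
    (hper : ∀ t ∈ B, ∀ x, |conv f (ind A) (x + t) - conv f (ind A) x| ≤ ε)
    (hf1 : l1 f ≤ 1 / (2 * α))
    (h0 : 1 - ε ≤ conv f (ind A) 0) :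
    ∃ x : G, 2 * α * (1 - 2 * ε) * B.card ≤ ((B.filter (fun b => b - x ∈ A)).card : ℝ) := by

  by_cases h1 : 1 - 2 * ε ≤ 0
  · refine ⟨0, ?_⟩
    have hB : (0:ℝ) ≤ B.card := Nat.cast_nonneg _
    have hcc : (0:ℝ) ≤ ((B.filter (fun b => b - (0:G) ∈ A)).card : ℝ) := Nat.cast_nonneg _
    nlinarith [mul_nonneg hα.le hB]
  push_neg at h1
  set c : G → ℝ := fun y => ((B.filter (fun b => b - y ∈ A)).card : ℝ) with hc
  obtain ⟨x₀, -, hx₀⟩ := Finset.exists_max_image (Finset.univ : Finset G) c ⟨0, Finset.mem_univ 0⟩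
  refine ⟨x₀, ?_⟩
  have hc0 : (0:ℝ) ≤ c x₀ := Nat.cast_nonneg _
  have step1 : (1 - 2 * ε) * B.card ≤ ∑ t ∈ B, conv f (ind A) t := by
    have hpt : ∀ t ∈ B, 1 - 2 * ε ≤ conv f (ind A) t := by
      intro t ht
      have h := abs_le.1 (by simpa using hper t ht 0)
      linarith [h.1]
    calc (1 - 2 * ε) * B.card = ∑ _t ∈ B, (1 - 2 * ε) := by
          rw [Finset.sum_const, nsmul_eq_mul, mul_comm]
      _ ≤ ∑ t ∈ B, conv f (ind A) t := Finset.sum_le_sum hpt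
  have step2 : ∑ t ∈ B, conv f (ind A) t = ∑ y, f y * c y := by
    simp only [conv]
    rw [Finset.sum_comm]
    refine Finset.sum_congr rfl fun y _ => ?_
    rw [← Finset.mul_sum]
    congr 1
    simp only [hc, ind]
    rw [Finset.sum_boole]
  have step3 : ∑ y, f y * c y ≤ l1 f * c x₀ := by
    calc ∑ y, f y * c y ≤ ∑ y, |f y| * c x₀ := by
          refine Finset.sum_le_sum fun y _ => ?_
          have h1y : f y * c y ≤ |f y| * c y :=
            mul_le_mul_of_nonneg_right (le_abs_self _) (Nat.cast_nonneg _)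
          have h2y : |f y| * c y ≤ |f y| * c x₀ :=
            mul_le_mul_of_nonneg_left (hx₀ y (Finset.mem_univ y)) (abs_nonneg _)
          linarith
      _ = l1 f * c x₀ := by rw [l1, Finset.sum_mul]
  have step4 : l1 f * c x₀ ≤ 1 / (2 * α) * c x₀ :=
    mul_le_mul_of_nonneg_right hf1 hc0
  have key : (1 - 2 * ε) * B.card ≤ 1 / (2 * α) * c x₀ := by
    linarith [step1, step2 ▸ step1, step3, step4]
  have h2α : (0:ℝ) < 2 * α := by linarith
  rw [div_mul_eq_mul_div, one_mul, le_div_iff₀ h2α] at key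
  show 2 * α * (1 - 2 * ε) * B.card ≤ c x₀
  nlinarith [key]
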